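/- Let S be a set and (x_n) a bounded sequence in ℓ^∞(S). Let Λ be the set of sequences (λ_n) in [0,1]^ℕ with ∑ λ_n = 1. If for every (λ_n) ∈ Λ the function ∑_n λ_n x_n attains its supremum on S, then inf{ sup_S ∑_n λ_n x_n : (λ_n) ∈ Λ } ≤ sup_{s ∈ S} limsup_n x_n(s). -/

import Mathlib

open Filter

section SimonsAux

variable {S : Type*}

/-- admissible coefficient sequences supported on `[n, ∞)` -/
def SimPn (n : ℕ) (l : ℕ → ℝ) : Prop :=
  (∀ k, 0 ≤ l k) ∧ (∀ k, k < n → l k = 0) ∧ HasSum l 1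

/-- the function on `S` obtained from a coefficient sequence -/
noncomputable def SimF (x : ℕ → S → ℝ) (l : ℕ → ℝ) (s : S) : ℝ := ∑' k, l k * x k s

variable {x : ℕ → S → ℝ} {C : ℝ}

lemma SimPn.le_one {n : ℕ} {l : ℕ → ℝ} (h : SimPn n l) (k : ℕ) : l k ≤ 1 :=
  le_hasSum h.2.2 k (fun j _ => h.1 j)

lemma SimPn.summable {n : ℕ} {l : ℕ → ℝ} (h : SimPn n l) : Summable l := h.2.2.summable

lemma SimPn.single (n : ℕ) : SimPn n (fun k => if k = n then 1 else 0) :=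
  ⟨fun k => by by_cases h : k = n <;> simp [h], fun k hk => if_neg (by omega), hasSum_ite_eq n 1⟩

lemma simSummable (hbdd : ∀ n s, |x n s| ≤ C) {l : ℕ → ℝ} (hnn : ∀ k, 0 ≤ l k)
    (hs : Summable l) (s : S) : Summable fun k => l k * x k s := by
  apply Summable.of_abs
  apply Summable.of_nonneg_of_le (fun k => abs_nonneg _) (fun k => ?_) (hs.mul_right C)
  rw [abs_mul, abs_of_nonneg (hnn k)]
  exact mul_le_mul_of_nonneg_left (hbdd k s) (hnn k)

lemma simF_le (hbdd : ∀ n s, |x n s| ≤ C) {n : ℕ} {l : ℕ → ℝ} (h : SimPn n l) (s : S)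
    (t : ℝ) (ht : ∀ k, n ≤ k → x k s ≤ t) : SimF x l s ≤ t := by
  have h1 : SimF x l s ≤ ∑' k, l k * t := by
    apply Summable.tsum_le_tsum _ (simSummable hbdd h.1 h.summable s) (h.summable.mul_right t)
    intro k
    rcases lt_or_ge k n with hk | hk
    · simp [h.2.1 k hk]
    · exact mul_le_mul_of_nonneg_left (ht k hk) (h.1 k)
  rwa [tsum_mul_right, h.2.2.tsum_eq, one_mul] at h1

lemma simF_abs_le (hbdd : ∀ n s, |x n s| ≤ C) {n : ℕ} {l : ℕ → ℝ} (h : SimPn n l) (s : S) :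
    |SimF x l s| ≤ C := by
  rw [abs_le]
  constructor
  · have h1 : ∑' k, l k * (-C) ≤ SimF x l s :=
      Summable.tsum_le_tsum (fun k => mul_le_mul_of_nonneg_left (neg_le_of_abs_le (hbdd k s)) (h.1 k))
        (h.summable.mul_right _) (simSummable hbdd h.1 h.summable s)
    rw [tsum_mul_right, h.2.2.tsum_eq, one_mul] at h1
    linarith
  · exact simF_le hbdd h s C (fun k _ => le_of_abs_le (hbdd k s))

lemma simF_mid (hbdd : ∀ n s, |x n s| ≤ C) {n m : ℕ} {l l' : ℕ → ℝ}
    (h : SimPn n l) (h' : SimPn m l') (s : S) :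
    SimF x (fun k => (l k + l' k) / 2) s = (SimF x l s + SimF x l' s) / 2 := by
  have hl := simSummable hbdd h.1 h.summable s
  have hl' := simSummable hbdd h'.1 h'.summable s
  unfold SimF
  calc (∑' k, (l k + l' k) / 2 * x k s)
      = ∑' k, (l k * x k s / 2 + l' k * x k s / 2) := by
        apply tsum_congr; intro k; ring
    _ = (∑' k, l k * x k s / 2) + ∑' k, l' k * x k s / 2 :=
        Summable.tsum_add (hl.div_const 2) (hl'.div_const 2)
    _ = ((∑' k, l k * x k s) + ∑' k, l' k * x k s) / 2 := by
        rw [tsum_div_const, tsum_div_const]; ring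

lemma simBdd {f : S → ℝ} {D : ℝ} (h : ∀ s, f s ≤ D) : BddAbove (Set.range f) :=
  ⟨D, by rintro r ⟨s, rfl⟩; exact h s⟩

lemma simPick [Nonempty S] (hbdd : ∀ n s, |x n s| ≤ C) (hC : 0 ≤ C) {ε : ℝ} (hε : 0 < ε)
    (n : ℕ) (v : S → ℝ) (D : ℝ) (hv : ∀ s, |v s| ≤ D) :
    ∃ l, SimPn n l ∧ ∀ w, SimPn n w →
      (⨆ s, v s + (1/2:ℝ)^n * SimF x l s) ≤ (⨆ s, v s + (1/2:ℝ)^n * SimF x w s) + ε := by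
  set T : Set ℝ := {r | ∃ w, SimPn n w ∧ r = ⨆ s, v s + (1/2:ℝ)^n * SimF x w s} with hT
  have hker : ∀ (w : ℕ → ℝ), SimPn n w → ∀ s : S,
      v s + (1/2:ℝ)^n * SimF x w s ≤ D + C := by
    intro w hw s
    have h1 : SimF x w s ≤ C := le_of_abs_le (simF_abs_le hbdd hw s)
    have h2 : (1/2:ℝ)^n * SimF x w s ≤ C := by
      calc (1/2:ℝ)^n * SimF x w s ≤ (1/2:ℝ)^n * C :=
            mul_le_mul_of_nonneg_left h1 (by positivity)
        _ ≤ 1 * C := mul_le_mul_of_nonneg_right (pow_le_one₀ (by norm_num) (by norm_num)) hC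
        _ = C := one_mul C
    have := (abs_le.1 (hv s)).2
    linarith
  have hTne : T.Nonempty := ⟨_, _, SimPn.single n, rfl⟩
  have hbb : BddBelow T := by
    refine ⟨-(D + C), ?_⟩
    rintro r ⟨w, hw, rfl⟩
    obtain ⟨s⟩ := ‹Nonempty S›
    refine le_trans ?_ (le_ciSup (simBdd (hker w hw)) s)
    have h1 : -C ≤ SimF x w s := neg_le_of_abs_le (simF_abs_le hbdd hw s)
    have h2 : (1/2:ℝ)^n * (-C) ≤ (1/2:ℝ)^n * SimF x w s :=
      mul_le_mul_of_nonneg_left h1 (by positivity)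
    have h3 : -C ≤ (1/2:ℝ)^n * (-C) := by
      rw [mul_neg, neg_le_neg_iff]
      calc (1/2:ℝ)^n * C ≤ 1 * C :=
        mul_le_mul_of_nonneg_right (pow_le_one₀ (by norm_num) (by norm_num)) hC
        _ = C := one_mul C
    have := (abs_le.1 (hv s)).1
    linarith
  obtain ⟨r, hrT, hr⟩ := Real.lt_sInf_add_pos hTne hε
  obtain ⟨l, hl, rfl⟩ := hrT
  refine ⟨l, hl, fun w hw => ?_⟩
  have := csInf_le hbb (⟨w, hw, rfl⟩ : (⨆ s, v s + (1/2:ℝ)^n * SimF x w s) ∈ T)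
  linarith

end SimonsAux
section SimonsAux2

variable {S : Type*}

/-- invariant carried through the inductive construction -/
def SimGood (x : ℕ → S → ℝ) (C ε : ℝ) (n : ℕ) (p : (S → ℝ) × (ℕ → ℝ)) : Prop :=
  (∀ s, |p.1 s| ≤ (1 - (1/2:ℝ)^n) * C) ∧ SimPn n p.2 ∧
  ∀ w, SimPn n w → (⨆ s, p.1 s + (1/2:ℝ)^n * SimF x p.2 s) ≤
    (⨆ s, p.1 s + (1/2:ℝ)^n * SimF x w s) + ε / 4^n

variable {x : ℕ → S → ℝ} {C : ℝ}

noncomputable def simBase [Nonempty S] (hbdd : ∀ n s, |x n s| ≤ C) (hC : 0 ≤ C)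
    {ε : ℝ} (hε : 0 < ε) : {p : (S → ℝ) × (ℕ → ℝ) // SimGood x C ε 0 p} := by
  have h := simPick hbdd hC (show (0:ℝ) < ε / 4^0 by positivity) 0
    (fun _ => (0:ℝ)) 0 (fun s => by norm_num)
  exact ⟨⟨fun _ => 0, h.choose⟩, ⟨fun s => by norm_num, h.choose_spec.1, h.choose_spec.2⟩⟩

noncomputable def simStep [Nonempty S] (hbdd : ∀ n s, |x n s| ≤ C) (hC : 0 ≤ C)
    {ε : ℝ} (hε : 0 < ε) (n : ℕ) (p : {q : (S → ℝ) × (ℕ → ℝ) // SimGood x C ε n q}) :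
    {q : (S → ℝ) × (ℕ → ℝ) // SimGood x C ε (n+1) q} := by
  have hv' : ∀ s, |p.1.1 s + (1/2:ℝ)^(n+1) * SimF x p.1.2 s| ≤ (1 - (1/2:ℝ)^(n+1)) * C := by
    intro s
    have h1 := p.2.1 s
    have h2 : |(1/2:ℝ)^(n+1) * SimF x p.1.2 s| ≤ (1/2:ℝ)^(n+1) * C := by
      rw [abs_mul, abs_of_nonneg (by positivity : (0:ℝ) ≤ (1/2:ℝ)^(n+1))]
      exact mul_le_mul_of_nonneg_left (simF_abs_le hbdd p.2.2.1 s) (by positivity)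
    calc |p.1.1 s + (1/2:ℝ)^(n+1) * SimF x p.1.2 s|
        ≤ |p.1.1 s| + |(1/2:ℝ)^(n+1) * SimF x p.1.2 s| := abs_add_le _ _
      _ ≤ (1 - (1/2:ℝ)^n) * C + (1/2:ℝ)^(n+1) * C := add_le_add h1 h2
      _ = (1 - (1/2:ℝ)^(n+1)) * C := by rw [pow_succ]; ring
  have h := simPick hbdd hC (show (0:ℝ) < ε / 4^(n+1) by positivity) (n+1)
    (fun s => p.1.1 s + (1/2:ℝ)^(n+1) * SimF x p.1.2 s) ((1 - (1/2:ℝ)^(n+1)) * C) hv'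
  exact ⟨⟨fun s => p.1.1 s + (1/2:ℝ)^(n+1) * SimF x p.1.2 s, h.choose⟩,
    ⟨hv', h.choose_spec.1, h.choose_spec.2⟩⟩

noncomputable def simSt [Nonempty S] (hbdd : ∀ n s, |x n s| ≤ C) (hC : 0 ≤ C)
    {ε : ℝ} (hε : 0 < ε) : ∀ n : ℕ, {p : (S → ℝ) × (ℕ → ℝ) // SimGood x C ε n p} :=
  fun n => Nat.rec (simBase hbdd hC hε) (fun n ih => simStep hbdd hC hε n ih) n

lemma simSt_succ [Nonempty S] (hbdd : ∀ n s, |x n s| ≤ C) (hC : 0 ≤ C)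
    {ε : ℝ} (hε : 0 < ε) (n : ℕ) (s : S) :
    (simSt hbdd hC hε (n+1)).1.1 s =
      (simSt hbdd hC hε n).1.1 s + (1/2:ℝ)^(n+1) * SimF x (simSt hbdd hC hε n).1.2 s := rfl

lemma simSt_zero [Nonempty S] (hbdd : ∀ n s, |x n s| ≤ C) (hC : 0 ≤ C)
    {ε : ℝ} (hε : 0 < ε) (s : S) : (simSt hbdd hC hε 0).1.1 s = 0 := rfl

/-- geometric tail mixture of the chosen coefficient sequences -/
noncomputable def simMu (lam : ℕ → ℕ → ℝ) (n k : ℕ) : ℝ := ∑' i, (1/2:ℝ)^(i+1) * lam (n+i) k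

lemma simGeom : HasSum (fun i : ℕ => (1/2:ℝ)^(i+1)) 1 := by
  have h := (hasSum_geometric_two).mul_left (1/2:ℝ)
  norm_num at h
  simpa [pow_succ, mul_comm] using h

lemma simMu_summable_inner {lam : ℕ → ℕ → ℝ} (hlam : ∀ n, SimPn n (lam n)) (n k : ℕ) :
    Summable fun i => (1/2:ℝ)^(i+1) * lam (n+i) k := by
  apply Summable.of_nonneg_of_le (fun i => mul_nonneg (by positivity) ((hlam (n+i)).1 k)) (fun i => ?_)
    simGeom.summable
  calc (1/2:ℝ)^(i+1) * lam (n+i) k ≤ (1/2:ℝ)^(i+1) * 1 :=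
        mul_le_mul_of_nonneg_left ((hlam (n+i)).le_one k) (by positivity)
    _ = (1/2:ℝ)^(i+1) := mul_one _

set_option maxHeartbeats 1000000 in
lemma simMu_pn {lam : ℕ → ℕ → ℝ} (hlam : ∀ n, SimPn n (lam n)) (n : ℕ) :
    SimPn n (simMu lam n) := by
  have hnn : ∀ k, 0 ≤ simMu lam n k := by
    intro k
    unfold simMu
    exact tsum_nonneg (fun i => mul_nonneg (by positivity) ((hlam (n+i)).1 k))
  have hz : ∀ k, k < n → simMu lam n k = 0 := by
    intro k hk
    unfold simMu
    have : ∀ i : ℕ, (1/2:ℝ)^(i+1) * lam (n+i) k = 0 := by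
      intro i
      rw [(hlam (n+i)).2.1 k (by omega), mul_zero]
    exact (tsum_congr this).trans tsum_zero
  refine ⟨hnn, hz, ?_⟩
  set g : ℕ × ℕ → ℝ := fun p => (1/2:ℝ)^(p.1+1) * lam (n+p.1) p.2 with hg
  have hgnn : 0 ≤ g := by
    intro p
    simp only [hg]
    exact mul_nonneg (by positivity) ((hlam (n+p.1)).1 p.2)
  have hsum_inner : ∀ i : ℕ, Summable fun k => g (i, k) := by
    intro i
    simp only [hg]
    exact ((hlam (n+i)).summable).mul_left _
  have htsum_inner : ∀ i : ℕ, (∑' k, g (i, k)) = (1/2:ℝ)^(i+1) := by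
    intro i
    simp only [hg]
    rw [tsum_mul_left, (hlam (n+i)).2.2.tsum_eq, mul_one]
  have hgsum : Summable g := by
    rw [summable_prod_of_nonneg hgnn]
    refine ⟨hsum_inner, ?_⟩
    apply Summable.congr simGeom.summable
    intro i
    exact (htsum_inner i).symm
  have hmusum : Summable (simMu lam n) := by
    have hswap : Summable fun p : ℕ × ℕ => g p.swap := hgsum.prod_symm
    have := (summable_prod_of_nonneg (fun p => hgnn p.swap)).1 hswap
    exact this.2
  rw [hmusum.hasSum_iff]
  have hcomm : (∑' k, ∑' i, (fun i k => g (i, k)) i k) = ∑' i, ∑' k, (fun i k => g (i, k)) i k :=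
    Summable.tsum_comm (by exact hgsum)
  calc (∑' k, simMu lam n k) = ∑' k, ∑' i, g (i, k) := by
        apply tsum_congr; intro k; unfold simMu; simp only [hg]
    _ = ∑' i, ∑' k, g (i, k) := hcomm
    _ = ∑' i, (1/2:ℝ)^(i+1) := tsum_congr htsum_inner
    _ = 1 := simGeom.tsum_eq

lemma simMu_rec {lam : ℕ → ℕ → ℝ} (hlam : ∀ n, SimPn n (lam n)) (n k : ℕ) :
    simMu lam n k = (lam n k + simMu lam (n+1) k) / 2 := by
  unfold simMu
  rw [Summable.tsum_eq_zero_add (simMu_summable_inner hlam n k)]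
  have h1 : (∑' i : ℕ, (1/2:ℝ)^(i+1+1) * lam (n+(i+1)) k)
      = ∑' i : ℕ, (1/2:ℝ) * ((1/2:ℝ)^(i+1) * lam ((n+1)+i) k) := by
    apply tsum_congr
    intro i
    rw [show n+(i+1) = (n+1)+i from by omega]
    ring
  rw [h1, tsum_mul_left]
  norm_num
  ring

end SimonsAux2
/-- Simons' inequality. -/
theorem simons_inequality {S : Type*} (x : ℕ → S → ℝ) (C : ℝ)
    (hbdd : ∀ n s, |x n s| ≤ C)
    (hattain : ∀ l : ℕ → ℝ, (∀ n, 0 ≤ l n ∧ l n ≤ 1) → HasSum l 1 →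
      ∃ s0 : S, ∀ s : S, ∑' n, l n * x n s ≤ ∑' n, l n * x n s0) :
    sInf {c : ℝ | ∃ l : ℕ → ℝ, (∀ n, 0 ≤ l n ∧ l n ≤ 1) ∧ HasSum l 1 ∧
        c = ⨆ s : S, ∑' n, l n * x n s} ≤
      ⨆ s : S, limsup (fun n => x n s) atTop := by
  by_cases hS : Nonempty S
  swap
  · obtain ⟨s0, -⟩ := hattain (fun k => if k = 0 then 1 else 0)
      (fun k => by by_cases h : k = 0 <;> simp [h]) (hasSum_ite_eq 0 1)
    exact absurd ⟨s0⟩ hS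
  have hC : 0 ≤ C := le_trans (abs_nonneg _) (hbdd 0 (Classical.arbitrary S))
  apply le_of_forall_pos_le_add
  intro ε hε
  have hε2 : (0:ℝ) < ε/2 := by positivity
  set lam : ℕ → ℕ → ℝ := fun n => (simSt hbdd hC hε2 n).1.2 with hlamdef
  set Vf : ℕ → S → ℝ := fun n => (simSt hbdd hC hε2 n).1.1 with hVdef
  have hlam : ∀ n, SimPn n (lam n) := by
    intro n; rw [hlamdef]; exact (simSt hbdd hC hε2 n).2.2.1
  have hVb : ∀ n s, |Vf n s| ≤ (1-(1/2:ℝ)^n)*C := by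
    intro n s; rw [hVdef]; exact (simSt hbdd hC hε2 n).2.1 s
  have hpick : ∀ n w, SimPn n w →
      (⨆ s, Vf n s + (1/2:ℝ)^n * SimF x (lam n) s) ≤
        (⨆ s, Vf n s + (1/2:ℝ)^n * SimF x w s) + (ε/2)/4^n := by
    intro n w hw
    rw [hVdef, hlamdef]
    exact (simSt hbdd hC hε2 n).2.2.2 w hw
  have hV0 : ∀ s, Vf 0 s = 0 := by
    intro s; rw [hVdef]; exact simSt_zero hbdd hC hε2 s
  have hVsucc : ∀ n s, Vf (n+1) s = Vf n s + (1/2:ℝ)^(n+1) * SimF x (lam n) s := by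
    intro n s; rw [hVdef, hlamdef]; exact simSt_succ hbdd hC hε2 n s
  have hmu : ∀ n, SimPn n (simMu lam n) := simMu_pn hlam
  have hmuF : ∀ n s, SimF x (simMu lam n) s
      = (SimF x (lam n) s + SimF x (simMu lam (n+1)) s) / 2 := by
    intro n s
    have h1 : simMu lam n = fun k => (lam n k + simMu lam (n+1) k)/2 :=
      funext (simMu_rec hlam n)
    rw [h1]
    exact simF_mid hbdd (hlam n) (hmu (n+1)) s
  obtain ⟨b, hb⟩ := hattain (simMu lam 0)
    (fun k => ⟨(hmu 0).1 k, (hmu 0).le_one k⟩) (hmu 0).2.2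
  have hb' : ∀ s, SimF x (simMu lam 0) s ≤ SimF x (simMu lam 0) b := hb
  set σ := SimF x (simMu lam 0) b with hσdef
  have hD1 : ∀ n s, SimF x (simMu lam 0) s = Vf n s + (1/2:ℝ)^n * SimF x (simMu lam n) s := by
    intro n
    induction n with
    | zero => intro s; simp [hV0 s]
    | succ n ih =>
      intro s
      rw [ih s, hVsucc n s, hmuF n s]
      ring
  have hSle : ∀ n, (⨆ s, Vf n s + (1/2:ℝ)^n * SimF x (lam n) s) ≤ σ + (ε/2)/4^n := by
    intro n
    have h2 : (⨆ s, Vf n s + (1/2:ℝ)^n * SimF x (simMu lam n) s) ≤ σ := by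
      apply ciSup_le
      intro s
      rw [← hD1 n s]
      exact hb' s
    have := hpick n (simMu lam n) (hmu n)
    linarith
  have hGBdd : ∀ n, BddAbove (Set.range fun s => Vf n s + (1/2:ℝ)^n * SimF x (lam n) s) := by
    intro n
    apply simBdd (D := C)
    intro s
    have h1 := (abs_le.1 (hVb n s)).2
    have h2 : (1/2:ℝ)^n * SimF x (lam n) s ≤ (1/2:ℝ)^n * C :=
      mul_le_mul_of_nonneg_left (le_of_abs_le (simF_abs_le hbdd (hlam n) s)) (by positivity)
    have h3 : (1-(1/2:ℝ)^n)*C + (1/2:ℝ)^n*C = C := by ring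
    linarith
  have hGb : ∀ n, Vf n b + (1/2:ℝ)^n * SimF x (lam n) b ≤
      ⨆ s, Vf n s + (1/2:ℝ)^n * SimF x (lam n) s := fun n => le_ciSup (hGBdd n) b
  have hKey : ∀ n, σ - 2*(ε/2)*(1 - (1/2:ℝ)^n) ≤ SimF x (simMu lam n) b := by
    intro n
    induction n with
    | zero => norm_num; exact hσdef.le
    | succ n ih =>
      have hpow : (0:ℝ) < (1/2:ℝ)^n := by positivity
      have h1 : Vf n b + (1/2:ℝ)^n * SimF x (lam n) b ≤ σ + (ε/2)/4^n :=
        le_trans (hGb n) (hSle n)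
      have h2 : σ = Vf n b + (1/2:ℝ)^n * SimF x (simMu lam n) b := hD1 n b
      have h3 : (1/2:ℝ)^n * (SimF x (lam n) b - SimF x (simMu lam n) b) ≤ (ε/2)/4^n := by
        linarith
      have h4 : (ε/2)/4^n = (ε/2) * ((1/2:ℝ)^n * (1/2:ℝ)^n) := by
        rw [← mul_pow, show (1/2:ℝ)*(1/2) = 1/4 by norm_num, div_pow, one_pow]
        ring
      have h5 : SimF x (lam n) b - SimF x (simMu lam n) b ≤ (ε/2) * (1/2:ℝ)^n := by
        rw [h4] at h3
        nlinarith
      have h6 : SimF x (simMu lam (n+1)) b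
          = 2 * SimF x (simMu lam n) b - SimF x (lam n) b := by
        have := hmuF n b; linarith
      have hps : (1/2:ℝ)^(n+1) = (1/2:ℝ)^n / 2 := by rw [pow_succ]; ring
      rw [h6, hps]
      nlinarith
  have hKey' : ∀ n, σ - ε ≤ SimF x (simMu lam n) b := by
    intro n
    have := hKey n
    have hp : (0:ℝ) ≤ (1/2:ℝ)^n := by positivity
    nlinarith
  have hbound : IsBoundedUnder (· ≤ ·) atTop (fun k => x k b) :=
    isBoundedUnder_of ⟨C, fun k => le_of_abs_le (hbdd k b)⟩
  have hlsb : σ - ε ≤ limsup (fun k => x k b) atTop := by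
    apply le_of_forall_pos_le_add
    intro δ hδ
    have hfreq : ∃ᶠ k in atTop, σ - ε - δ ≤ x k b := by
      rw [frequently_atTop]
      intro n
      by_contra hcon
      push_neg at hcon
      have := simF_le hbdd (hmu n) b (σ - ε - δ) (fun k hk => (hcon k hk).le)
      linarith [hKey' n]
    have := le_limsup_of_frequently_le hfreq hbound
    linarith
  have hlimBdd : BddAbove (Set.range fun s => limsup (fun k => x k s) atTop) := by
    apply simBdd (D := C)
    intro s
    apply limsup_le_of_le
    · exact (isBoundedUnder_of ⟨-C, fun k => neg_le_of_abs_le (hbdd k s)⟩ :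
        IsBoundedUnder (· ≥ ·) atTop fun k => x k s).isCoboundedUnder_le
    · exact Filter.Eventually.of_forall (fun k => le_of_abs_le (hbdd k s))
  have hRHS : limsup (fun k => x k b) atTop ≤ ⨆ s, limsup (fun k => x k s) atTop :=
    le_ciSup hlimBdd b
  have hzBdd : BddAbove (Set.range (SimF x (simMu lam 0))) :=
    simBdd (fun s => le_of_abs_le (simF_abs_le hbdd (hmu 0) s))
  have hσsup : (⨆ s, SimF x (simMu lam 0) s) = σ :=
    le_antisymm (ciSup_le hb') (le_ciSup hzBdd b)
  have hmem : σ ∈ {c : ℝ | ∃ l : ℕ → ℝ, (∀ n, 0 ≤ l n ∧ l n ≤ 1) ∧ HasSum l 1 ∧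
      c = ⨆ s : S, ∑' n, l n * x n s} :=
    ⟨simMu lam 0, fun k => ⟨(hmu 0).1 k, (hmu 0).le_one k⟩, (hmu 0).2.2, hσsup.symm⟩
  have hbdBelow : BddBelow {c : ℝ | ∃ l : ℕ → ℝ, (∀ n, 0 ≤ l n ∧ l n ≤ 1) ∧ HasSum l 1 ∧
      c = ⨆ s : S, ∑' n, l n * x n s} := by
    refine ⟨-C, ?_⟩
    rintro c ⟨l, hl1, hl2, rfl⟩
    have hl : SimPn 0 l := ⟨fun k => (hl1 k).1, fun k hk => absurd hk (Nat.not_lt_zero k), hl2⟩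
    obtain ⟨s⟩ := hS
    refine le_trans (neg_le_of_abs_le (simF_abs_le hbdd hl s)) ?_
    exact le_ciSup (simBdd (fun t => le_of_abs_le (simF_abs_le hbdd hl t))) s
  have hInf : sInf {c : ℝ | ∃ l : ℕ → ℝ, (∀ n, 0 ≤ l n ∧ l n ≤ 1) ∧ HasSum l 1 ∧
      c = ⨆ s : S, ∑' n, l n * x n s} ≤ σ := csInf_le hbdBelow hmem
  linarith
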